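/- Let 2 ≤ k < q, r = q − k, and u ∈ 𝔽_q^q. Then u = u_{a x^k + g} for some a ∈ 𝔽_q with a ≠ 0 and some g ∈ S_{k,θ} (i.e., u is a standard deep hole of TRS_k(𝔽_q, θ)) if and only if the syndrome H·u^T equals (0, 0, …, 0, w_{r-1})^T for some w_{r-1} ∈ 𝔽_q with w_{r-1} ≠ 0. -/

import Mathlib

open Polynomial Finset

/-- The set `S_{k,θ}` of twisted polynomials
`Σ_{i=0}^{k-2} f_i x^i + f_{k-1}(x^{k-1} + θ x^k)`. -/
def Sset (F : Type*) [Field F] (k : ℕ) (θ : F) : Set (Polynomial F) :=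
  {p | ∃ f : ℕ → F, p = (∑ i ∈ Finset.range (k - 1), Polynomial.C (f i) * Polynomial.X ^ i)
        + Polynomial.C (f (k - 1)) * (Polynomial.X ^ (k - 1) + Polynomial.C θ * Polynomial.X ^ k)}

/-- The twisted Reed–Solomon code `TRS_k(A, θ)` for the evaluation sequence `α`. -/
def TRS {F : Type*} [Field F] {n : ℕ} (α : Fin n → F) (k : ℕ) (θ : F) : Set (Fin n → F) :=
  {v | ∃ p ∈ Sset F k θ, v = fun j => p.eval (α j)}

/-- The (Hamming) error distance `d(u, C)` from a word `u` to a code `C`. -/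
noncomputable def distTo {F : Type*} [DecidableEq F] {n : ℕ} (u : Fin n → F)
    (C : Set (Fin n → F)) : ℕ :=
  sInf {d | ∃ c ∈ C, hammingDist u c = d}

/-- The covering radius `ρ(C) = max_u d(u, C)` of a code `C`. -/
noncomputable def covRad {F : Type*} [DecidableEq F] {n : ℕ} (C : Set (Fin n → F)) : ℕ :=
  sSup {d | ∃ u, distTo u C = d}

/-- `u` is a deep hole of `C` if `d(u, C) = ρ(C)`. -/
def IsDeepHole {F : Type*} [DecidableEq F] {n : ℕ} (C : Set (Fin n → F)) (u : Fin n → F) :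
    Prop :=
  distTo u C = covRad C

/-- The column vector `c_{r,θ}(a) = (1, a, …, a^{r-2}, a^{r-1} - θ a^r)ᵀ ∈ 𝔽_q^r`. -/
def crv (F : Type*) [Field F] (r : ℕ) (θ a : F) : Fin r → F :=
  fun i => if (i : ℕ) = r - 1 then a ^ (r - 1) - θ * a ^ r else a ^ (i : ℕ)

/-- The parity-check matrix `H` whose `j`-th column is `c_{r,θ}(α_j)`. -/
def Hmat {F : Type*} [Field F] {n : ℕ} (r : ℕ) (θ : F) (α : Fin n → F) :
    Matrix (Fin r) (Fin n) F :=
  Matrix.of fun i j => crv F r θ (α j) i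

section aux
variable {F : Type*} [Field F] [Fintype F] [DecidableEq F]

lemma aux_sum_pow (m : ℕ) (hm : m < 2 * (Fintype.card F - 1)) :
    ∑ a : F, a ^ m = if m = Fintype.card F - 1 then -1 else 0 := by
  have hq2 : 2 ≤ Fintype.card F := Fintype.one_lt_card
  rcases lt_trichotomy m (Fintype.card F - 1) with h | h | h
  · rw [if_neg (by omega)]
    exact FiniteField.sum_pow_lt_card_sub_one F m h
  · rw [if_pos h]
    have key : ∀ a : F, a ^ m = 1 - (if a = 0 then 1 else 0) := by
      intro a
      by_cases ha : a = 0
      · subst ha; rw [if_pos rfl, zero_pow (by omega), sub_self]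
      · rw [if_neg ha, sub_zero, h, FiniteField.pow_card_sub_one_eq_one a ha]
    rw [Finset.sum_congr rfl fun a _ => key a, Finset.sum_sub_distrib,
        Finset.sum_const, Finset.sum_ite_eq' Finset.univ (0 : F) (fun _ => (1 : F))]
    simp [FiniteField.cast_card_eq_zero F]
  · rw [if_neg (by omega)]
    have key : ∀ a : F, a ^ m = a ^ (m - (Fintype.card F - 1)) := by
      intro a
      by_cases ha : a = 0
      · subst ha; rw [zero_pow (by omega), zero_pow (by omega)]
      · conv_lhs => rw [show m = (m - (Fintype.card F - 1)) + (Fintype.card F - 1) by omega]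
        rw [pow_add, FiniteField.pow_card_sub_one_eq_one a ha, mul_one]
    rw [Finset.sum_congr rfl fun a _ => key a]
    exact FiniteField.sum_pow_lt_card_sub_one F _ (by omega)

lemma aux_sum_pow_mul_eval (f : F[X]) (hf : f.degree < (Fintype.card F : ℕ))
    (e : ℕ) (he : e < Fintype.card F - 1) :
    ∑ a : F, a ^ e * f.eval a = -(f.coeff (Fintype.card F - 1 - e)) := by
  have hq2 : 2 ≤ Fintype.card F := Fintype.one_lt_card
  have hnd : f.natDegree < Fintype.card F := by
    by_cases h0 : f = 0
    · simp [h0]; omega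
    · exact (Polynomial.natDegree_lt_iff_degree_lt h0).mpr hf
  calc ∑ a : F, a ^ e * f.eval a
      = ∑ a : F, ∑ m ∈ Finset.range (Fintype.card F), f.coeff m * a ^ (e + m) := by
        refine Finset.sum_congr rfl fun a _ => ?_
        rw [Polynomial.eval_eq_sum_range' hnd a, Finset.mul_sum]
        refine Finset.sum_congr rfl fun m _ => ?_
        rw [pow_add]; ring
    _ = ∑ m ∈ Finset.range (Fintype.card F), ∑ a : F, f.coeff m * a ^ (e + m) :=
        Finset.sum_comm
    _ = ∑ m ∈ Finset.range (Fintype.card F), f.coeff m * ∑ a : F, a ^ (e + m) := by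
        simp_rw [Finset.mul_sum]
    _ = ∑ m ∈ Finset.range (Fintype.card F),
          (if m = Fintype.card F - 1 - e then -f.coeff m else 0) := by
        refine Finset.sum_congr rfl fun m hm => ?_
        have hm' := Finset.mem_range.mp hm
        rw [aux_sum_pow (e + m) (by omega)]
        by_cases h : m = Fintype.card F - 1 - e
        · rw [if_pos (by omega), if_pos h]; ring
        · rw [if_neg (by omega), if_neg h, mul_zero]
    _ = -(f.coeff (Fintype.card F - 1 - e)) := by
        rw [Finset.sum_ite_eq' _ _ _, if_pos (Finset.mem_range.mpr (by omega))]

lemma aux_syndrome {q : ℕ} (hq : q = Fintype.card F) {k : ℕ} (hk2 : 2 ≤ k) (hkq : k < q)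
    (θ : F) (α : Fin q → F) (hα : Function.Bijective α)
    (f : F[X]) (hf : f.degree < (q : ℕ)) (i : Fin (q - k)) :
    (Hmat (q - k) θ α).mulVec (fun j => f.eval (α j)) i =
      if (i : ℕ) = q - k - 1 then θ * f.coeff (k - 1) - f.coeff k
      else -(f.coeff (q - 1 - (i : ℕ))) := by
  subst hq
  have hi := i.isLt
  have hsum : (Hmat (Fintype.card F - k) θ α).mulVec (fun j => f.eval (α j)) i
      = ∑ a : F, crv F (Fintype.card F - k) θ a i * f.eval a := by
    simp only [Matrix.mulVec, dotProduct, Hmat, Matrix.of_apply]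
    exact Fintype.sum_bijective α hα _ _ (fun j => rfl)
  rw [hsum]
  by_cases hir : (i : ℕ) = Fintype.card F - k - 1
  · rw [if_pos hir]
    have h1 : ∀ a : F, crv F (Fintype.card F - k) θ a i
        = a ^ (Fintype.card F - k - 1) - θ * a ^ (Fintype.card F - k) := fun a => if_pos hir
    have h2 : ∑ a : F, crv F (Fintype.card F - k) θ a i * f.eval a
        = (∑ a : F, a ^ (Fintype.card F - k - 1) * f.eval a)
          - θ * ∑ a : F, a ^ (Fintype.card F - k) * f.eval a := by
      rw [Finset.mul_sum, ← Finset.sum_sub_distrib]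
      exact Finset.sum_congr rfl fun a _ => by rw [h1 a]; ring
    rw [h2, aux_sum_pow_mul_eval f hf _ (by omega), aux_sum_pow_mul_eval f hf _ (by omega),
        show Fintype.card F - 1 - (Fintype.card F - k - 1) = k by omega,
        show Fintype.card F - 1 - (Fintype.card F - k) = k - 1 by omega]
    ring
  · rw [if_neg hir]
    have h1 : ∀ a : F, crv F (Fintype.card F - k) θ a i = a ^ (i : ℕ) := fun a => if_neg hir
    rw [Finset.sum_congr rfl fun a _ => by rw [h1 a]]
    exact aux_sum_pow_mul_eval f hf _ (by omega)

end aux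

section aux2
variable {F : Type*} [Field F]

lemma aux_coeff (k : ℕ) (hk : 2 ≤ k) (θ : F) (fc : ℕ → F) (m : ℕ) :
    ((∑ i ∈ Finset.range (k-1), C (fc i) * X ^ i)
      + C (fc (k-1)) * (X ^ (k-1) + C θ * X ^ k)).coeff m
    = if m < k - 1 then fc m
      else if m = k - 1 then fc (k-1)
      else if m = k then θ * fc (k-1) else 0 := by
  simp only [coeff_add, Polynomial.finset_sum_coeff, coeff_C_mul, coeff_X_pow,
    mul_ite, mul_one, mul_zero, Finset.sum_ite_eq, Finset.mem_range, mul_add]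
  split_ifs <;> first | (exfalso; omega) | ring

end aux2

/-- For `2 ≤ k < q`, `r = q - k` and `u ∈ 𝔽_q^q`: `u` is a standard deep
hole, i.e. `u = u_{a x^k + g}` with `a ≠ 0` and `g ∈ S_{k,θ}`, iff the syndrome `H·uᵀ` is of
the form `(0, …, 0, w_{r-1})ᵀ` with `w_{r-1} ≠ 0`. -/
theorem standard_deep_hole_iff_syndrome {F : Type*} [Field F] [Fintype F] [DecidableEq F]
    (q : ℕ) (hq : q = Fintype.card F) (k : ℕ) (hk2 : 2 ≤ k) (hkq : k < q)
    (θ : F) (hθ : θ ≠ 0) (α : Fin q → F) (hα : Function.Bijective α) (u : Fin q → F) :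
    (∃ a : F, a ≠ 0 ∧ ∃ g ∈ Sset F k θ,
        u = fun j => (Polynomial.C a * Polynomial.X ^ k + g).eval (α j)) ↔
      ∃ c : F, c ≠ 0 ∧
        (Hmat (q - k) θ α).mulVec u = fun i : Fin (q - k) => if (i : ℕ) = q - k - 1 then c else 0 := by
  subst hq
  constructor
  · rintro ⟨a, ha, g, ⟨fc, rfl⟩, rfl⟩
    refine ⟨-a, neg_ne_zero.mpr ha, ?_⟩
    set p := Polynomial.C a * Polynomial.X ^ k
      + ((∑ i ∈ Finset.range (k-1), Polynomial.C (fc i) * Polynomial.X ^ i)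
      + Polynomial.C (fc (k-1)) * (Polynomial.X ^ (k-1) + Polynomial.C θ * Polynomial.X ^ k))
      with hp
    have hpc : ∀ m, p.coeff m = (if m = k then a else 0)
        + (if m < k - 1 then fc m else if m = k - 1 then fc (k-1)
           else if m = k then θ * fc (k-1) else 0) := by
      intro m
      rw [hp, coeff_add, coeff_C_mul, coeff_X_pow, aux_coeff k hk2 θ fc m, mul_ite, mul_one,
        mul_zero]
    have hdeg : p.degree < (Fintype.card F : ℕ) := by
      refine lt_of_le_of_lt ((Polynomial.degree_le_iff_coeff_zero p (k : ℕ)).mpr ?_) ?_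
      · intro m hm
        have hm' : k < m := by exact_mod_cast hm
        rw [hpc m]
        split_ifs <;> first | (exfalso; omega) | simp
      · exact_mod_cast hkq
    funext i
    rw [aux_syndrome rfl hk2 hkq θ α hα p hdeg i]
    have hi := i.isLt
    by_cases hir : (i : ℕ) = Fintype.card F - k - 1
    · rw [if_pos hir, if_pos hir, hpc k, hpc (k-1)]
      split_ifs <;> first | (exfalso; omega) | ring
    · rw [if_neg hir, if_neg hir, hpc _]
      split_ifs <;> first | (exfalso; omega) | simp
  · rintro ⟨c, hc, hsyn⟩
    set e := Equiv.ofBijective α hα with he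
    set f := Lagrange.interpolate Finset.univ (id : F → F) (fun a => u (e.symm a)) with hfdef
    have hinj : Set.InjOn (id : F → F) ↑(Finset.univ : Finset F) := Function.injective_id.injOn
    have hfd : f.degree < (Fintype.card F : ℕ) := by
      have h := Lagrange.degree_interpolate_lt (r := fun a => u (e.symm a)) hinj
      rw [hfdef]; simpa using h
    have hfe : ∀ j, f.eval (α j) = u j := by
      intro j
      have h1 := Lagrange.eval_interpolate_at_node (r := fun a => u (e.symm a)) hinj
        (Finset.mem_univ (α j))
      have h2 : e.symm (α j) = j := e.symm_apply_eq.mpr rfl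
      rw [hfdef]; simpa [h2] using h1
    have hu : u = fun j => f.eval (α j) := funext fun j => (hfe j).symm
    rw [hu] at hsyn
    have hsy : ∀ i : Fin (Fintype.card F - k),
        (if (i : ℕ) = Fintype.card F - k - 1 then θ * f.coeff (k-1) - f.coeff k
         else -(f.coeff (Fintype.card F - 1 - (i : ℕ))))
        = (if (i : ℕ) = Fintype.card F - k - 1 then c else 0) := by
      intro i
      rw [← aux_syndrome rfl hk2 hkq θ α hα f hfd i]
      exact congrFun hsyn i
    have hvanish : ∀ m, k < m → f.coeff m = 0 := by
      intro m hm
      by_cases hmq : m ≤ Fintype.card F - 1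
      · have hlt : Fintype.card F - 1 - m < Fintype.card F - k := by omega
        have h := hsy ⟨Fintype.card F - 1 - m, hlt⟩
        rw [show ((⟨Fintype.card F - 1 - m, hlt⟩ : Fin (Fintype.card F - k)) : ℕ)
            = Fintype.card F - 1 - m from rfl] at h
        rw [if_neg (by omega), if_neg (by omega),
          show Fintype.card F - 1 - (Fintype.card F - 1 - m) = m by omega] at h
        exact neg_eq_zero.mp h
      · refine Polynomial.coeff_eq_zero_of_degree_lt (lt_of_lt_of_le hfd ?_)
        have hm2 : Fintype.card F ≤ m := by omega
        exact_mod_cast hm2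
    have hck : θ * f.coeff (k-1) - f.coeff k = c := by
      have hlt : Fintype.card F - k - 1 < Fintype.card F - k := by omega
      have h := hsy ⟨Fintype.card F - k - 1, hlt⟩
      rw [show ((⟨Fintype.card F - k - 1, hlt⟩ : Fin (Fintype.card F - k)) : ℕ)
          = Fintype.card F - k - 1 from rfl, if_pos rfl, if_pos rfl] at h
      exact h
    set a := f.coeff k - θ * f.coeff (k-1) with hadef
    have hac : a = -c := by rw [← hck]; ring
    have ha : a ≠ 0 := by rw [hac]; exact neg_ne_zero.mpr hc
    refine ⟨a, ha, f - Polynomial.C a * Polynomial.X ^ k, ⟨fun i => f.coeff i, ?_⟩, ?_⟩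
    · apply Polynomial.ext
      intro m
      rw [aux_coeff k hk2 θ _ m, coeff_sub, coeff_C_mul, coeff_X_pow, mul_ite, mul_one, mul_zero]
      by_cases h2 : m < k - 1
      · rw [if_pos h2, if_neg (by omega : ¬ m = k), sub_zero]
      · by_cases h3 : m = k - 1
        · rw [if_neg h2, if_pos h3, if_neg (by omega : ¬ m = k), sub_zero, h3]
        · by_cases h4 : m = k
          · rw [if_neg h2, if_neg h3, if_pos h4, if_pos h4, h4, hadef]
            ring
          · rw [if_neg h2, if_neg h3, if_neg h4, if_neg h4, hvanish m (by omega), sub_zero]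
    · have hfixa : Polynomial.C a * Polynomial.X ^ k
          + (f - Polynomial.C a * Polynomial.X ^ k) = f := by ring
      rw [hfixa, hu]
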